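/- arXiv:2208.03810 — 2 statements merged into one kernel-verified Lean document; each statement's English description precedes it below -/
import Mathlib

section
/- For every integer d ≥ 1, letting n = 2^d + d and letting f be the address function on n variables, under unit costs and the uniform distribution every non-adaptive strategy has expected cost at least 2^{d−1}; in particular OPT_N(f) ≥ 2^{d−1}. -/
open Finset

/-- The set of tested indices `T` determines `f` on input `x`:
every input agreeing with `x` on `T` gives the same function value. -/
def Determines (n : ℕ) (f : (Fin n → Bool) → Bool) (T : Finset (Fin n))
    (x : Fin n → Bool) : Prop :=
  ∀ x' : Fin n → Bool, (∀ i ∈ T, x' i = x i) → f x' = f x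

/-- The set of indices tested by the non-adaptive strategy `π` in its first `k` tests. -/
def prefixSet (n : ℕ) (π : Equiv.Perm (Fin n)) (k : ℕ) : Finset (Fin n) :=
  Finset.univ.filter (fun i => (π.symm i).val < k)

/-- The number of tests performed by the non-adaptive strategy `π` on input `x`:
the least `k` such that the first `k` tested indices determine `f` on `x`. -/
noncomputable def naSteps (n : ℕ) (f : (Fin n → Bool) → Bool)
    (π : Equiv.Perm (Fin n)) (x : Fin n → Bool) : ℕ :=
  sInf {k : ℕ | Determines n f (prefixSet n π k) x}

/-- The cost incurred by the non-adaptive strategy `π` on input `x`, with cost vector `c`. -/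
noncomputable def naCost (n : ℕ) (f : (Fin n → Bool) → Bool) (c : Fin n → ℝ)
    (π : Equiv.Perm (Fin n)) (x : Fin n → Bool) : ℝ :=
  ∑ i ∈ prefixSet n π (naSteps n f π x), c i

/-- Probability of the outcome `x` under the product distribution with parameters `p`. -/
def prodWeight (n : ℕ) (p : Fin n → ℝ) (x : Fin n → Bool) : ℝ :=
  ∏ i : Fin n, if x i then p i else 1 - p i

/-- Expected cost of the non-adaptive strategy `π`. -/
noncomputable def naExpCost (n : ℕ) (f : (Fin n → Bool) → Bool) (c : Fin n → ℝ)
    (p : Fin n → ℝ) (π : Equiv.Perm (Fin n)) : ℝ :=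
  ∑ x : Fin n → Bool, prodWeight n p x * naCost n f c π x

/-- Optimal expected cost among non-adaptive strategies. -/
noncomputable def OPTN (n : ℕ) (f : (Fin n → Bool) → Bool) (c : Fin n → ℝ)
    (p : Fin n → ℝ) : ℝ :=
  sInf { r : ℝ | ∃ π : Equiv.Perm (Fin n), r = naExpCost n f c p π }

/-- Binary decision trees over `n` variables (adaptive strategies). -/
inductive DecTree (n : ℕ) : Type
  | leaf : Bool → DecTree n
  | node : Fin n → DecTree n → DecTree n → DecTree n

/-- Evaluation of a decision tree on an input. -/
def DecTree.eval {n : ℕ} : DecTree n → (Fin n → Bool) → Bool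
  | .leaf b, _ => b
  | .node i t0 t1, x => if x i then DecTree.eval t1 x else DecTree.eval t0 x

/-- Cost of a decision tree on input `x`: the sum of the costs of the indices
labeling the internal nodes on the root-to-leaf path followed on `x`. -/
def DecTree.costOn {n : ℕ} (c : Fin n → ℝ) : DecTree n → (Fin n → Bool) → ℝ
  | .leaf _, _ => 0
  | .node i t0 t1, x =>
      c i + (if x i then DecTree.costOn c t1 x else DecTree.costOn c t0 x)

/-- The decision tree `t` computes the function `f`. -/
def DecTree.Computes {n : ℕ} (t : DecTree n) (f : (Fin n → Bool) → Bool) : Prop :=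
  ∀ x, t.eval x = f x

/-- Expected cost of an adaptive strategy (decision tree). -/
noncomputable def adExpCost (n : ℕ) (c : Fin n → ℝ) (p : Fin n → ℝ)
    (t : DecTree n) : ℝ :=
  ∑ x : Fin n → Bool, prodWeight n p x * DecTree.costOn c t x

/-- Optimal expected cost among adaptive strategies computing `f`. -/
noncomputable def OPTA (n : ℕ) (f : (Fin n → Bool) → Bool) (c : Fin n → ℝ)
    (p : Fin n → ℝ) : ℝ :=
  sInf { r : ℝ | ∃ t : DecTree n, DecTree.Computes t f ∧ r = adExpCost n c p t }

/-- `f` is the monotone read-once DNF whose terms are the (nonempty, pairwise disjoint)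
sets of variables `T 0, …, T (m-1)`. -/
def IsReadOnceDNF (n m : ℕ) (T : Fin m → Finset (Fin n))
    (f : (Fin n → Bool) → Bool) : Prop :=
  (∀ j, (T j).Nonempty) ∧
  (∀ j k, j ≠ k → Disjoint (T j) (T k)) ∧
  (∀ x, f x = true ↔ ∃ j, ∀ i ∈ T j, x i = true)

/-- The value of variable `j` of `x : Fin (2^d + d) → Bool` (false for out-of-range `j`).
Variables `0, …, d-1` are the address bits and variables `d, …, d + 2^d - 1` are the
dedicated bits. -/
def xAt (d : ℕ) (x : Fin (2 ^ d + d) → Bool) (j : ℕ) : Bool :=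
  if h : j < 2 ^ d + d then x ⟨j, h⟩ else false

/-- The address encoded in binary by the `d` address bits of `x`. -/
def addrVal (d : ℕ) (x : Fin (2 ^ d + d) → Bool) : ℕ :=
  ∑ j ∈ Finset.range d, if xAt d x j then 2 ^ j else 0

/-- The address function on `n = 2^d + d` variables: it returns the dedicated bit
indexed by the address encoded by the `d` address bits. -/
def addressFn (d : ℕ) (x : Fin (2 ^ d + d) → Bool) : Bool :=
  xAt d x (d + addrVal d x)

open Finset

/-- Sum of a set of `n` distinct naturals is at least `0+1+...+(n-1)`. -/
lemma sum_range_le_sum_finset : ∀ (n : ℕ) (s : Finset ℕ), s.card = n →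
    ∑ i ∈ Finset.range n, i ≤ ∑ i ∈ s, i := by
  intro n
  induction n with
  | zero => intro s _; simp
  | succ n ih =>
    intro s hcard
    have hne : s.Nonempty := by rw [← Finset.card_pos, hcard]; omega
    set m := s.max' hne with hm
    have hmem : m ∈ s := s.max'_mem hne
    have hnm : n ≤ m := by
      have hsub : s ⊆ Finset.range (m + 1) := fun x hx =>
        Finset.mem_range.2 (Nat.lt_succ_of_le (s.le_max' x hx))
      have := Finset.card_le_card hsub
      rw [Finset.card_range, hcard] at this; omega
    have herase : (s.erase m).card = n := by
      rw [Finset.card_erase_of_mem hmem, hcard]; omega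
    calc ∑ i ∈ Finset.range (n+1), i = (∑ i ∈ Finset.range n, i) + n :=
          Finset.sum_range_succ _ _
      _ ≤ (∑ i ∈ s.erase m, i) + m := add_le_add (ih _ herase) hnm
      _ = ∑ i ∈ s, i := Finset.sum_erase_add s _ hmem

lemma sum_range_le_of_inj {α : Type*} [Fintype α] [DecidableEq α] (F : α → ℕ)
    (hF : Function.Injective F) :
    ∑ i ∈ Finset.range (Fintype.card α), i ≤ ∑ a : α, F a := by
  have himg : (Finset.univ.image F).card = Fintype.card α := by
    rw [Finset.card_image_of_injective _ hF, Finset.card_univ]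
  have h := sum_range_le_sum_finset _ (Finset.univ.image F) himg
  rwa [Finset.sum_image (fun a _ b _ h => hF h)] at h

lemma bool_sum_lt (d : ℕ) (b : ℕ → Bool) :
    (∑ j ∈ Finset.range d, if b j then 2 ^ j else 0) < 2 ^ d := by
  induction d with
  | zero => simp
  | succ d ih =>
    rw [Finset.sum_range_succ, pow_succ]
    have : (if b d then 2 ^ d else 0) ≤ 2 ^ d := by split <;> omega
    omega

/-- Binary value of `d` bits. -/
def binVal (d : ℕ) (z : Fin d → Bool) : ℕ :=
  ∑ j : Fin d, if z j then 2 ^ (j : ℕ) else 0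

lemma binVal_eq_range (d : ℕ) (z : Fin d → Bool) :
    binVal d z = ∑ j ∈ Finset.range d,
      (if h : j < d then (if z ⟨j, h⟩ then 2 ^ j else 0) else 0) := by
  rw [← Fin.sum_univ_eq_sum_range (fun j =>
    if h : j < d then (if z ⟨j, h⟩ then 2 ^ j else 0) else 0) d]
  exact Finset.sum_congr rfl fun j _ => by simp [j.isLt]

lemma binVal_lt (d : ℕ) (z : Fin d → Bool) : binVal d z < 2 ^ d := by
  rw [binVal_eq_range]
  have h2 := bool_sum_lt d (fun j => if h : j < d then z ⟨j, h⟩ else false)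
  calc _ ≤ ∑ j ∈ Finset.range d,
        if (fun j => if h : j < d then z ⟨j, h⟩ else false) j then 2 ^ j else 0 := by
        apply Finset.sum_le_sum; intro j hj
        have hjd : j < d := Finset.mem_range.1 hj
        simp [hjd]
    _ < 2 ^ d := h2

lemma binVal_injective (d : ℕ) : Function.Injective (binVal d) := by
  intro z z' h
  have key : ∀ w : Fin d → Bool, binVal d w =
      ((finFunctionFinEquiv (fun j => if w j then (1 : Fin 2) else 0) : Fin (2 ^ d)) : ℕ) := by
    intro w
    rw [finFunctionFinEquiv_apply]
    apply Finset.sum_congr rfl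
    intro j _
    by_cases hw : w j <;> simp [hw]
  rw [key z, key z'] at h
  have h2 : (fun j => if z j then (1 : Fin 2) else 0) =
      (fun j => if z' j then (1 : Fin 2) else 0) :=
    finFunctionFinEquiv.injective (Fin.val_injective h)
  funext j
  have hj := congrFun h2 j
  by_cases hz : z j <;> by_cases hz' : z' j <;> simp_all

lemma addrVal_lt (d : ℕ) (x : Fin (2 ^ d + d) → Bool) : addrVal d x < 2 ^ d :=
  bool_sum_lt d (xAt d x)

lemma addrVal_eq_binVal (d : ℕ) (x : Fin (2 ^ d + d) → Bool) (z : Fin d → Bool)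
    (h : ∀ (j : ℕ) (hj : j < d), xAt d x j = z ⟨j, hj⟩) :
    addrVal d x = binVal d z := by
  rw [binVal_eq_range]
  apply Finset.sum_congr rfl
  intro j hj
  have hjd : j < d := Finset.mem_range.1 hj
  rw [h j hjd]
  simp [hjd]

/-- The splitting equivalence between inputs and (address bits, dedicated bits). -/
def splitEquiv (d : ℕ) : (Fin (2 ^ d + d) → Bool) ≃ ((Fin d → Bool) × (Fin (2 ^ d) → Bool)) where
  toFun x := (fun j => x ⟨j, by have := j.isLt; have := Nat.one_le_two_pow (n := d); omega⟩,
              fun k => x ⟨d + k, by have := k.isLt; omega⟩)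
  invFun zy := fun i => if h : (i : ℕ) < d then zy.1 ⟨i, h⟩
    else zy.2 ⟨(i : ℕ) - d, by have := i.isLt; omega⟩
  left_inv x := by
    funext i
    by_cases h : (i : ℕ) < d
    · simp [h]
    · simp only [h, dite_false]
      congr 1
      exact Fin.ext (by simp; omega)
  right_inv zy := by
    ext j
    · have h : (j : ℕ) < d := j.isLt
      simp [h]
    · have h : ¬ (d + (j : ℕ) < d) := by omega
      simp only [h, dite_false]
      simp only [Nat.add_sub_cancel_left, Fin.eta]

lemma addrVal_split (d : ℕ) (z : Fin d → Bool) (y : Fin (2 ^ d) → Bool) :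
    addrVal d ((splitEquiv d).symm (z, y)) = binVal d z := by
  apply addrVal_eq_binVal
  intro j hj
  have hjn : j < 2 ^ d + d := by have : 0 < 2 ^ d := Nat.pow_pos (by norm_num); omega
  simp [xAt, hjn, splitEquiv, hj]

lemma crucial_lt (d : ℕ) (x : Fin (2 ^ d + d) → Bool) : d + addrVal d x < 2 ^ d + d := by
  have := addrVal_lt d x; omega

/-- Any set determining the address function on `x` contains the addressed dedicated bit. -/
lemma crucial_mem (d : ℕ) (x : Fin (2 ^ d + d) → Bool) (T : Finset (Fin (2 ^ d + d)))
    (hdet : Determines (2 ^ d + d) (addressFn d) T x) :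
    (⟨d + addrVal d x, crucial_lt d x⟩ : Fin (2 ^ d + d)) ∈ T := by
  by_contra hmem
  set i0 : Fin (2 ^ d + d) := ⟨d + addrVal d x, crucial_lt d x⟩ with hi0
  set x' : Fin (2 ^ d + d) → Bool := Function.update x i0 (!(x i0)) with hx'
  have hagree : ∀ i ∈ T, x' i = x i := by
    intro i hi
    have : i ≠ i0 := fun e => hmem (e ▸ hi)
    simp [hx', Function.update_of_ne this]
  have hfx := hdet x' hagree
  have hxAt : ∀ j < d, xAt d x' j = xAt d x j := by
    intro j hj
    have hjn : j < 2 ^ d + d := by have := crucial_lt d x; omega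
    have hne : (⟨j, hjn⟩ : Fin (2 ^ d + d)) ≠ i0 := by
      intro e
      have := congrArg Fin.val e
      simp [hi0] at this
      omega
    simp [xAt, hjn, hx', Function.update_of_ne hne]
  have haddr : addrVal d x' = addrVal d x := by
    unfold addrVal
    exact Finset.sum_congr rfl fun j hj => by rw [hxAt j (Finset.mem_range.1 hj)]
  have h1 : addressFn d x' = !(x i0) := by
    unfold addressFn
    rw [haddr]
    simp [xAt, crucial_lt d x, hx', hi0]
  have h2 : addressFn d x = x i0 := by
    unfold addressFn
    simp [xAt, crucial_lt d x, hi0]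
  rw [h1, h2] at hfx
  exact (Bool.not_ne_self _) hfx

/-- Determining with the full set is trivial. -/
lemma determines_univ (n : ℕ) (f : (Fin n → Bool) → Bool) (x : Fin n → Bool) :
    Determines n f Finset.univ x := fun x' h =>
  congrArg f (funext fun i => h i (Finset.mem_univ i))

lemma prefixSet_full (n : ℕ) (π : Equiv.Perm (Fin n)) : prefixSet n π n = Finset.univ := by
  unfold prefixSet
  exact Finset.filter_true_of_mem fun i _ => (π.symm i).isLt

/-- The pointwise cost lower bound. -/
lemma cost_lb (d : ℕ) (π : Equiv.Perm (Fin (2 ^ d + d))) (x : Fin (2 ^ d + d) → Bool) :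
    ((π.symm ⟨d + addrVal d x, crucial_lt d x⟩).val + 1 : ℝ) ≤
      naCost (2 ^ d + d) (addressFn d) (fun _ => 1) π x := by
  classical
  set k := naSteps (2 ^ d + d) (addressFn d) π x with hk
  have hne : Determines (2 ^ d + d) (addressFn d) (prefixSet (2 ^ d + d) π (2 ^ d + d)) x := by
    rw [prefixSet_full]; exact determines_univ _ _ x
  have hmem : k ∈ {m : ℕ | Determines (2 ^ d + d) (addressFn d) (prefixSet (2 ^ d + d) π m) x} :=
    Nat.sInf_mem ⟨2 ^ d + d, hne⟩
  have hi0 : (⟨d + addrVal d x, crucial_lt d x⟩ : Fin (2 ^ d + d)) ∈ prefixSet (2 ^ d + d) π k :=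
    crucial_mem d x _ hmem
  have hlt : (π.symm ⟨d + addrVal d x, crucial_lt d x⟩).val < k :=
    (Finset.mem_filter.1 hi0).2
  set m := (π.symm ⟨d + addrVal d x, crucial_lt d x⟩).val with hm
  have hmn : m + 1 ≤ 2 ^ d + d := (π.symm _).isLt
  have hf : ∀ j ∈ (Finset.univ : Finset (Fin (m + 1))),
      π (Fin.castLE hmn j) ∈ prefixSet (2 ^ d + d) π k := by
    intro j _
    simp only [prefixSet, Finset.mem_filter, Finset.mem_univ, true_and,
      Equiv.symm_apply_apply]
    exact lt_of_le_of_lt (Nat.lt_succ_iff.1 j.isLt) hlt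
  have hinj : Set.InjOn (fun j : Fin (m + 1) => π (Fin.castLE hmn j))
      ↑(Finset.univ : Finset (Fin (m + 1))) := fun a _ b _ h =>
    Fin.castLE_injective hmn (π.injective h)
  have hcard := Finset.card_le_card_of_injOn
    (t := prefixSet (2 ^ d + d) π k) (fun j : Fin (m + 1) => π (Fin.castLE hmn j)) hf hinj
  simp only [Finset.card_univ, Fintype.card_fin] at hcard
  unfold naCost
  rw [Finset.sum_const, nsmul_eq_mul, mul_one, ← hk]
  exact_mod_cast hcard

/-- The main lower bound on expected cost of any non-adaptive strategy. -/
lemma main_bound (d : ℕ) (hd : 1 ≤ d) (π : Equiv.Perm (Fin (2 ^ d + d))) :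
    (2 : ℝ) ^ (d - 1) ≤ naExpCost (2 ^ d + d) (addressFn d) (fun _ => 1) (fun _ => 1/2) π := by
  classical
  -- weights are constant
  have hw : ∀ x : Fin (2 ^ d + d) → Bool,
      prodWeight (2 ^ d + d) (fun _ => (1:ℝ)/2) x = (1/2) ^ (2 ^ d + d) := by
    intro x
    unfold prodWeight
    have h1 : ∀ i, (if x i then (1:ℝ)/2 else 1 - 1/2) = 1/2 := by
      intro i; split <;> norm_num
    rw [Finset.prod_congr rfl (fun i _ => h1 i), Finset.prod_const]
    simp
  -- the function of the address value
  set G : ℕ → ℝ := fun a => if h : d + a < 2 ^ d + d then ((π.symm ⟨d + a, h⟩).val + 1 : ℝ)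
    else 0 with hG
  have hGx : ∀ x : Fin (2 ^ d + d) → Bool,
      G (addrVal d x) = ((π.symm ⟨d + addrVal d x, crucial_lt d x⟩).val + 1 : ℝ) := by
    intro x
    simp only [hG]
    rw [dif_pos (crucial_lt d x)]
  -- step 1: pointwise bound
  have step1 : ∑ x : Fin (2 ^ d + d) → Bool, ((1:ℝ)/2) ^ (2 ^ d + d) * G (addrVal d x) ≤
      naExpCost (2 ^ d + d) (addressFn d) (fun _ => 1) (fun _ => 1/2) π := by
    unfold naExpCost
    apply Finset.sum_le_sum
    intro x _
    rw [hw x, hGx x]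
    exact mul_le_mul_of_nonneg_left (cost_lb d π x) (by positivity)
  -- step 2: compute the sum of G over all inputs
  have step2 : ∑ x : Fin (2 ^ d + d) → Bool, G (addrVal d x) =
      (2 : ℝ) ^ (2 ^ d) * ∑ z : Fin d → Bool, G (binVal d z) := by
    rw [← Equiv.sum_comp (splitEquiv d).symm (fun x => G (addrVal d x))]
    rw [Fintype.sum_prod_type]
    have : ∀ z : Fin d → Bool, ∀ y : Fin (2 ^ d) → Bool,
        G (addrVal d ((splitEquiv d).symm (z, y))) = G (binVal d z) := by
      intro z y; rw [addrVal_split]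
    calc ∑ z : Fin d → Bool, ∑ y : Fin (2 ^ d) → Bool, G (addrVal d ((splitEquiv d).symm (z, y)))
        = ∑ z : Fin d → Bool, ∑ _y : Fin (2 ^ d) → Bool, G (binVal d z) := by
          exact Finset.sum_congr rfl fun z _ => Finset.sum_congr rfl fun y _ => this z y
      _ = ∑ z : Fin d → Bool, (2 : ℝ) ^ (2 ^ d) * G (binVal d z) := by
          apply Finset.sum_congr rfl
          intro z _
          rw [Finset.sum_const, Finset.card_univ, nsmul_eq_mul]
          congr 1
          rw [Fintype.card_fun]
          simp
      _ = (2 : ℝ) ^ (2 ^ d) * ∑ z : Fin d → Bool, G (binVal d z) := by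
          rw [Finset.mul_sum]
  -- step 3: lower bound the sum over address vectors
  have hlt2 : ∀ z : Fin d → Bool, d + binVal d z < 2 ^ d + d := by
    intro z; have := binVal_lt d z; omega
  set F : (Fin d → Bool) → ℕ := fun z => (π.symm ⟨d + binVal d z, hlt2 z⟩).val with hF
  have hFinj : Function.Injective F := by
    intro z z' h
    have h2 : (π.symm ⟨d + binVal d z, hlt2 z⟩) = (π.symm ⟨d + binVal d z', hlt2 z'⟩) :=
      Fin.val_injective h
    have h3 := π.symm.injective h2
    have h4 : d + binVal d z = d + binVal d z' := congrArg Fin.val h3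
    exact binVal_injective d (by omega)
  have hGz : ∀ z : Fin d → Bool, G (binVal d z) = ((F z : ℝ) + 1) := by
    intro z
    simp only [hG, hF]
    rw [dif_pos (hlt2 z)]
  have hsum : ∀ z : Fin d → Bool, True := fun _ => trivial
  have hcardz : Fintype.card (Fin d → Bool) = 2 ^ d := by
    rw [Fintype.card_fun]; simp
  have step3 : ((∑ i ∈ Finset.range (2 ^ d), i : ℕ) : ℝ) + (2 : ℝ) ^ d ≤
      ∑ z : Fin d → Bool, G (binVal d z) := by
    have h5 := sum_range_le_of_inj F hFinj
    rw [hcardz] at h5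
    calc ((∑ i ∈ Finset.range (2 ^ d), i : ℕ) : ℝ) + (2 : ℝ) ^ d
        ≤ ((∑ z : Fin d → Bool, F z : ℕ) : ℝ) + (2 : ℝ) ^ d := by
          exact add_le_add (by exact_mod_cast h5) le_rfl
      _ = ∑ z : Fin d → Bool, ((F z : ℝ) + 1) := by
          rw [Finset.sum_add_distrib]
          push_cast
          congr 1
          rw [Finset.sum_const, Finset.card_univ, hcardz, nsmul_eq_mul]
          push_cast
          ring
      _ = ∑ z : Fin d → Bool, G (binVal d z) :=
          Finset.sum_congr rfl fun z _ => (hGz z).symm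
  -- gauss sum
  have hgauss : ((∑ i ∈ Finset.range (2 ^ d), i : ℕ) : ℝ) * 2 =
      (2:ℝ) ^ d * ((2:ℝ) ^ d - 1) := by
    have h := Finset.sum_range_id_mul_two (2 ^ d)
    have h1 : (1:ℕ) ≤ 2 ^ d := Nat.one_le_two_pow
    have := congrArg (fun t : ℕ => (t : ℝ)) h
    push_cast [Nat.cast_sub h1] at this
    push_cast
    linarith
  -- assemble
  refine le_trans ?_ step1
  rw [← Finset.mul_sum, step2]
  have hpow : ((1:ℝ)/2) ^ (2 ^ d + d) * (2 : ℝ) ^ (2 ^ d) = ((1:ℝ)/2) ^ d := by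
    rw [pow_add]
    have : ((1:ℝ)/2) ^ (2 ^ d) * (2:ℝ) ^ (2 ^ d) = 1 := by
      rw [← mul_pow]; norm_num
    calc ((1:ℝ)/2) ^ 2 ^ d * ((1:ℝ)/2) ^ d * (2:ℝ) ^ (2 ^ d)
        = (((1:ℝ)/2) ^ (2 ^ d) * (2:ℝ) ^ (2 ^ d)) * ((1:ℝ)/2) ^ d := by ring
      _ = ((1:ℝ)/2) ^ d := by rw [this]; ring
  rw [← mul_assoc, hpow]
  have hbound : (2:ℝ) ^ (d-1) ≤ ((1:ℝ)/2) ^ d * (((∑ i ∈ Finset.range (2 ^ d), i : ℕ) : ℝ) + (2:ℝ) ^ d) := by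
    have h2d : (0:ℝ) < (2:ℝ) ^ d := by positivity
    have hhalf : ((1:ℝ)/2) ^ d = ((2:ℝ) ^ d)⁻¹ := by
      rw [one_div, inv_pow]
    rw [hhalf]
    have hLHS : (2:ℝ) ^ (d - 1) * 2 = (2:ℝ) ^ d := by
      rw [← pow_succ]
      congr 1
      omega
    rw [inv_mul_eq_div, le_div_iff₀ h2d]
    have key : (2:ℝ) ^ (d-1) * (2:ℝ) ^ d * 2 ≤
        (((∑ i ∈ Finset.range (2 ^ d), i : ℕ) : ℝ) + (2:ℝ) ^ d) * 2 := by
      have e : (2:ℝ) ^ (d-1) * (2:ℝ) ^ d * 2 = (2:ℝ) ^ d * (2:ℝ) ^ d := by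
        rw [mul_right_comm, hLHS]
      rw [e]
      nlinarith [hgauss, h2d]
    exact le_of_mul_le_mul_right key two_pos
  refine le_trans hbound ?_
  exact mul_le_mul_of_nonneg_left step3 (by positivity)


/-- For every `d ≥ 1`, with `n = 2^d + d` and `f` the address function on `n` variables,
under unit costs and the uniform distribution every non-adaptive strategy has expected
cost at least `2^(d-1)`; in particular `OPT_N(f) ≥ 2^(d-1)`. -/
theorem stmt15 (d : ℕ) (hd : 1 ≤ d) :
    (∀ π : Equiv.Perm (Fin (2 ^ d + d)),
        (2 : ℝ) ^ (d - 1) ≤ naExpCost (2 ^ d + d) (addressFn d) (fun _ => 1) (fun _ => 1/2) π) ∧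
      (2 : ℝ) ^ (d - 1) ≤ OPTN (2 ^ d + d) (addressFn d) (fun _ => 1) (fun _ => 1/2) := by
  refine ⟨fun π => main_bound d hd π, ?_⟩
  rw [OPTN]
  refine le_csInf ⟨naExpCost (2 ^ d + d) (addressFn d) (fun _ => 1) (fun _ => 1/2) 1, 1, rfl⟩ ?_
  rintro r ⟨π, rfl⟩
  exact main_bound d hd π
end

section
/- Let f : {0,1}^n → {0,1} be a monotone read-once DNF in which every term contains at most w variables, where w ≥ 1 is an integer. Under unit costs and the uniform distribution, there is a non-adaptive strategy S whose expected cost is at most w · OPT_A(f); in particular OPT_N(f) ≤ w · OPT_A(f). -/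
open Finset
open List

noncomputable section AuxAll


/-- probability that a term with `d` fresh variables is falsified -/
def qr (d : ℕ) : ℝ := 1 - (1/2 : ℝ)^d

lemma qr_nonneg (d : ℕ) : 0 ≤ qr d := by
  have h : (1/2:ℝ)^d ≤ 1 := pow_le_one₀ (by norm_num) (by norm_num)
  unfold qr; linarith

lemma qr_le_one (d : ℕ) : qr d ≤ 1 := by
  have h : (0:ℝ) ≤ (1/2:ℝ)^d := by positivity
  unfold qr; linarith

lemma qr_succ (d : ℕ) : qr (d+1) = 1/2 + qr d / 2 := by
  unfold qr; rw [pow_succ]; ring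

lemma qr_mono {e x : ℕ} (h : e ≤ x) : qr e ≤ qr x := by
  have h1 : (1/2:ℝ)^x ≤ (1/2)^e := pow_le_pow_of_le_one (by norm_num) (by norm_num) h
  unfold qr; linarith

lemma key_ratio {e x : ℕ} (h : e ≤ x) : (e:ℝ) * (1 - qr x) ≤ (x:ℝ) * (1 - qr e) := by
  have h1 : (1/2:ℝ)^x ≤ (1/2)^e := pow_le_pow_of_le_one (by norm_num) (by norm_num) h
  have h2 : (0:ℝ) ≤ (1/2:ℝ)^x := by positivity
  have h3 : (e:ℝ) ≤ (x:ℝ) := Nat.cast_le.mpr h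
  have : (e:ℝ) * (1/2)^x ≤ (x:ℝ) * (1/2)^e :=
    mul_le_mul h3 h1 h2 (by positivity)
  unfold qr
  convert this using 2 <;> ring

/-- value of the non-adaptive strategy evaluating terms (given by their sizes) in order -/
def NSl : List ℕ → ℝ
  | [] => 0
  | d :: L => d + qr d * NSl L

lemma NSl_nonneg : ∀ L : List ℕ, 0 ≤ NSl L
  | [] => le_refl 0
  | d :: L => by
      have := NSl_nonneg L
      have := qr_nonneg d
      simp only [NSl]
      positivity

/-- inserting in sorted position is at least as good as putting in front -/
lemma NSl_orderedInsert_le (x : ℕ) : ∀ (M : List ℕ), M.Pairwise (·≤·) →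
    NSl (M.orderedInsert (·≤·) x) ≤ x + qr x * NSl M := by
  intro M
  induction M with
  | nil => simp [NSl, List.orderedInsert]
  | cons e M ih =>
    intro hs
    by_cases hxe : x ≤ e
    · simp [List.orderedInsert, hxe, NSl]
    · push_neg at hxe
      have hs' : M.Pairwise (·≤·) := hs.of_cons
      have hrec := ih hs'
      simp only [List.orderedInsert, (by simpa using hxe.not_ge : ¬ x ≤ e), if_false, NSl]
      have hq : 0 ≤ qr e := qr_nonneg e
      have h2 : qr e * NSl (M.orderedInsert (·≤·) x) ≤ qr e * (x + qr x * NSl M) :=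
        mul_le_mul_of_nonneg_left hrec hq
      have hkey : (e:ℝ) * (1 - qr x) ≤ (x:ℝ) * (1 - qr e) := key_ratio hxe.le
      have hN : 0 ≤ NSl M := NSl_nonneg M
      nlinarith [hkey, h2]


/-- fuel-based recursion for optimal adaptive cost of disjoint-terms DNF with term sizes D -/
def Bfuel : ℕ → Multiset ℕ → ℝ
  | 0, _ => 0
  | (k+1), D =>
    if h : D = 0 then 0 else
      (D.toFinset.inf' (by simpa using h) fun d =>
        1 + Bfuel k (D.erase d) / 2 + (if d ≤ 1 then 0 else Bfuel k ((d-1) ::ₘ D.erase d)) / 2)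

def Bm (D : Multiset ℕ) : ℝ := Bfuel (D.sum + D.card) D

lemma Bfuel_zero (k : ℕ) : Bfuel k 0 = 0 := by cases k <;> simp [Bfuel]

lemma Bfuel_nonneg : ∀ (k : ℕ) (D : Multiset ℕ), 0 ≤ Bfuel k D := by
  intro k
  induction k with
  | zero => intro D; simp [Bfuel]
  | succ k ih =>
    intro D
    by_cases h : D = 0
    · simp [Bfuel, h]
    · rw [Bfuel, dif_neg h]
      apply Finset.le_inf'
      intro d _
      have h1 := ih (D.erase d)
      have h2 : (0:ℝ) ≤ (if d ≤ 1 then 0 else Bfuel k ((d-1) ::ₘ D.erase d)) := by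
        split
        · exact le_rfl
        · exact ih _
      linarith
  
lemma measure_erase_lt {D : Multiset ℕ} {d : ℕ} (hd : d ∈ D) :
    (D.erase d).sum + (D.erase d).card + 1 ≤ D.sum + D.card := by
  have h1 : D.erase d ≠ D → True := fun _ => trivial
  have hD := Multiset.cons_erase hd
  calc (D.erase d).sum + (D.erase d).card + 1
      ≤ (D.erase d).sum + d + ((D.erase d).card + 1) := by omega
    _ = (d ::ₘ D.erase d).sum + (d ::ₘ D.erase d).card := by
        rw [Multiset.sum_cons, Multiset.card_cons]; omega
    _ = D.sum + D.card := by rw [hD]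

lemma measure_dec_lt {D : Multiset ℕ} {d : ℕ} (hd : d ∈ D) (h2 : ¬ d ≤ 1) :
    ((d-1) ::ₘ D.erase d).sum + ((d-1) ::ₘ D.erase d).card + 1 ≤ D.sum + D.card := by
  have hsum : D.sum = d + (D.erase d).sum := by
    have h := Multiset.sum_cons d (D.erase d)
    rw [Multiset.cons_erase hd] at h; exact h.symm ▸ rfl
  have hcard : Multiset.card D = (D.erase d).card + 1 := by
    have h := Multiset.card_cons d (D.erase d)
    rw [Multiset.cons_erase hd] at h; omega
  rw [Multiset.sum_cons, Multiset.card_cons]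
  omega

lemma Bfuel_stable : ∀ (k : ℕ) (D : Multiset ℕ), D.sum + D.card ≤ k → Bfuel (k+1) D = Bfuel k D := by
  intro k
  induction k using Nat.strong_induction_on with
  | _ k ih =>
    intro D hk
    by_cases h : D = 0
    · simp [h, Bfuel_zero]
    · have hk1 : 1 ≤ D.sum + D.card := by
        rcases Multiset.exists_mem_of_ne_zero h with ⟨a, ha⟩
        have := Multiset.card_pos.mpr h
        omega
      obtain ⟨j, rfl⟩ : ∃ j, k = j + 1 := ⟨k - 1, by omega⟩
      rw [Bfuel, Bfuel, dif_neg h, dif_neg h]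
      apply Finset.inf'_congr _ rfl
      intro d hd
      have hdD : d ∈ D := Multiset.mem_toFinset.mp hd
      have e1 : Bfuel (j+1) (D.erase d) = Bfuel j (D.erase d) := by
        apply ih j (by omega)
        have := measure_erase_lt hdD; omega
      rw [e1]
      congr 1
      split
      · rfl
      · rename_i h2
        congr 1
        apply ih j (by omega)
        have := measure_dec_lt hdD h2; omega

lemma Bfuel_eq_Bm : ∀ (k : ℕ) (D : Multiset ℕ), D.sum + D.card ≤ k → Bfuel k D = Bm D := by
  intro k
  induction k with
  | zero =>
    intro D h
    have hD : D = 0 := by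
      by_contra h0
      have hc : 0 < Multiset.card D := Multiset.card_pos.mpr h0
      omega
    subst hD; simp [Bm, Bfuel_zero]
  | succ k ih =>
    intro D h
    rcases Nat.lt_or_ge (D.sum + D.card) (k+1) with h1 | h1
    · rw [Bfuel_stable k D (by omega), ih D (by omega)]
    · have : D.sum + D.card = k + 1 := by omega
      rw [Bm, this]

lemma Bm_nonneg (D : Multiset ℕ) : 0 ≤ Bm D := Bfuel_nonneg _ _

lemma Bm_zero : Bm 0 = 0 := by simp [Bm, Bfuel_zero]

/-- the branch inequality: `Bm D` is at most the value of testing a variable of term `d` -/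
lemma Bm_le_branch {D : Multiset ℕ} {d : ℕ} (hd : d ∈ D) :
    Bm D ≤ 1 + Bm (D.erase d) / 2 + (if d ≤ 1 then 0 else Bm ((d-1) ::ₘ D.erase d)) / 2 := by
  have h : D ≠ 0 := by rintro rfl; simp at hd
  have hk1 : 1 ≤ D.sum + D.card := by
    have := Multiset.card_pos.mpr h; omega
  obtain ⟨j, hj⟩ : ∃ j, D.sum + D.card = j + 1 := ⟨D.sum + D.card - 1, by omega⟩
  rw [Bm, hj, Bfuel, dif_neg h]
  have step := Finset.inf'_le (b := d)
    (fun d => 1 + Bfuel j (D.erase d) / 2 + (if d ≤ 1 then 0 else Bfuel j ((d-1) ::ₘ D.erase d)) / 2)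
    (Multiset.mem_toFinset.mpr hd)
  refine le_trans step ?_
  have e1 : Bfuel j (D.erase d) = Bm (D.erase d) := by
    apply Bfuel_eq_Bm; have := measure_erase_lt hd; omega
  have e2 : (if d ≤ 1 then (0:ℝ) else Bfuel j ((d-1) ::ₘ D.erase d))
      = (if d ≤ 1 then (0:ℝ) else Bm ((d-1) ::ₘ D.erase d)) := by
    split
    · rfl
    · rename_i h2
      apply Bfuel_eq_Bm
      have := measure_dec_lt hd h2; omega
  rw [e1, e2]

/-- some branch attains `Bm D` -/
lemma Bm_exists_branch {D : Multiset ℕ} (h : D ≠ 0) :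
    ∃ d ∈ D, Bm D = 1 + Bm (D.erase d) / 2 + (if d ≤ 1 then 0 else Bm ((d-1) ::ₘ D.erase d)) / 2 := by
  have hk1 : 1 ≤ D.sum + D.card := by
    have := Multiset.card_pos.mpr h; omega
  obtain ⟨j, hj⟩ : ∃ j, D.sum + D.card = j + 1 := ⟨D.sum + D.card - 1, by omega⟩
  have hne : D.toFinset.Nonempty := by simpa using h
  obtain ⟨d, hd, he⟩ := Finset.exists_mem_eq_inf' hne
    (fun d => 1 + Bfuel j (D.erase d) / 2 + (if d ≤ 1 then 0 else Bfuel j ((d-1) ::ₘ D.erase d)) / 2)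
  have hdD : d ∈ D := Multiset.mem_toFinset.mp hd
  refine ⟨d, hdD, ?_⟩
  rw [Bm, hj, Bfuel, dif_neg h, he]
  have e1 : Bfuel j (D.erase d) = Bm (D.erase d) := by
    apply Bfuel_eq_Bm; have := measure_erase_lt hdD; omega
  rw [e1]
  congr 1
  split
  · rfl
  · rename_i h2
    congr 1
    apply Bfuel_eq_Bm
    have := measure_dec_lt hdD h2; omega

lemma NSl_key (w d : ℕ) (hdw : d + 1 ≤ w) :
    ∀ L : List ℕ, L.Pairwise (·≤·) →
    NSl (L.orderedInsert (·≤·) (d+1)) ≤ w + NSl L / 2 + NSl (L.orderedInsert (·≤·) d) / 2 := by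
  have hw : (d:ℝ) + 1 ≤ (w:ℝ) := by exact_mod_cast hdw
  have hd0 : (0:ℝ) ≤ d := Nat.cast_nonneg d
  intro L
  induction L with
  | nil =>
    intro _
    simp only [List.orderedInsert, NSl]
    push_cast
    linarith
  | cons e L₀ ih =>
    intro hs
    have hs' : L₀.Pairwise (·≤·) := hs.of_cons
    have hrec := ih hs'
    have S0 := NSl_nonneg L₀
    have Sd := NSl_nonneg (L₀.orderedInsert (·≤·) d)
    have qe1 := qr_le_one e
    have qe0 := qr_nonneg e
    have qd1 := qr_le_one d
    have qd0 := qr_nonneg d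
    have hw0 : (0:ℝ) ≤ w := Nat.cast_nonneg w
    by_cases h1 : d + 1 ≤ e
    · have h2 : d ≤ e := le_trans (Nat.le_succ d) h1
      simp only [List.orderedInsert, if_pos h1, if_pos h2, NSl, qr_succ]
      push_cast
      nlinarith [mul_le_mul_of_nonneg_right qe1 (NSl_nonneg (e::L₀))]
    · simp only [List.orderedInsert, if_neg h1, NSl]
      by_cases h2 : d ≤ e
      · -- e = d
        have he : e = d := le_antisymm (Nat.lt_succ_iff.mp (Nat.lt_of_not_le h1)) h2
        subst he
        simp only [List.orderedInsert, if_pos h2, NSl, qr_succ]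
        have hoi := NSl_orderedInsert_le e L₀ hs'
        have := mul_le_mul_of_nonneg_left hrec qe0
        have := mul_le_mul_of_nonneg_left hoi (mul_nonneg qe0 qe0)
        push_cast
        nlinarith [mul_le_mul_of_nonneg_right qe1 hw0, mul_le_mul_of_nonneg_left hoi qe0]
      · simp only [List.orderedInsert, if_neg h2, NSl]
        have := mul_le_mul_of_nonneg_left hrec qe0
        push_cast
        nlinarith [mul_le_mul_of_nonneg_right qe1 hw0]

lemma qr_one : qr 1 = 1/2 := by norm_num [qr]

lemma msort_cons (d : ℕ) (E : Multiset ℕ) :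
    (d ::ₘ E).sort (·≤·) = (E.sort (·≤·)).orderedInsert (·≤·) d := by
  apply List.Perm.eq_of_pairwise' (Multiset.pairwise_sort _ _)
    (List.Pairwise.orderedInsert d _ (Multiset.pairwise_sort _ _))
  have h1 : ((d ::ₘ E).sort (·≤·) : Multiset ℕ) = (d :: E.sort (·≤·) : List ℕ) := by
    rw [Multiset.sort_eq, ← Multiset.cons_coe, Multiset.sort_eq]
  have h2 : (d ::ₘ E).sort (·≤·) ~ d :: E.sort (·≤·) := Multiset.coe_eq_coe.mp h1
  exact h2.trans (List.perm_orderedInsert _ _ _).symm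

lemma main_N (w : ℕ) (hw : 1 ≤ w) : ∀ (k : ℕ) (D : Multiset ℕ), D.sum + D.card ≤ k →
    (∀ e ∈ D, 1 ≤ e) → (∀ e ∈ D, e ≤ w) → NSl (D.sort (·≤·)) ≤ w * Bm D := by
  have hw' : (1:ℝ) ≤ (w:ℝ) := by exact_mod_cast hw
  intro k
  induction k with
  | zero =>
    intro D hk _ _
    have hD : D = 0 := by
      by_contra h0
      have := Multiset.card_pos.mpr h0; omega
    subst hD
    simp only [Multiset.sort_zero, NSl]
    have := Bm_nonneg (0 : Multiset ℕ)
    nlinarith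
  | succ k ih =>
    intro D hk h1 h2
    by_cases h0 : D = 0
    · subst h0
      simp only [Multiset.sort_zero, NSl]
      have := Bm_nonneg (0 : Multiset ℕ)
      nlinarith
    · obtain ⟨d, hd, hB⟩ := Bm_exists_branch h0
      have hDE : d ::ₘ D.erase d = D := Multiset.cons_erase hd
      have hsort : D.sort (·≤·) = ((D.erase d).sort (·≤·)).orderedInsert (·≤·) d := by
        conv_lhs => rw [← hDE]
        rw [msort_cons]
      have hmE : (D.erase d).sum + (D.erase d).card ≤ k := by
        have := measure_erase_lt hd; omega
      have h1E : ∀ e ∈ D.erase d, 1 ≤ e := fun e he => h1 e (Multiset.mem_of_mem_erase he)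
      have h2E : ∀ e ∈ D.erase d, e ≤ w := fun e he => h2 e (Multiset.mem_of_mem_erase he)
      have ihE : NSl ((D.erase d).sort (·≤·)) ≤ w * Bm (D.erase d) := ih _ hmE h1E h2E
      have hd1 : 1 ≤ d := h1 d hd
      have hdw : d ≤ w := h2 d hd
      have hBmE := Bm_nonneg (D.erase d)
      by_cases hle : d ≤ 1
      · have hd1' : d = 1 := le_antisymm hle hd1
        subst hd1'
        rw [hsort]
        have hoi := NSl_orderedInsert_le 1 ((D.erase 1).sort (·≤·)) (Multiset.pairwise_sort _ _)
        rw [if_pos (le_refl 1)] at hB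
        rw [hB, qr_one] at *
        push_cast at hoi ⊢
        nlinarith
      · have hd2 : 2 ≤ d := by omega
        have hdec : d - 1 + 1 = d := by omega
        have hkey := NSl_key w (d-1) (by omega) ((D.erase d).sort (·≤·)) (Multiset.pairwise_sort _ _)
        rw [hdec] at hkey
        have hsort2 : ((d-1) ::ₘ D.erase d).sort (·≤·)
            = ((D.erase d).sort (·≤·)).orderedInsert (·≤·) (d-1) := msort_cons _ _
        have hmdec : ((d-1) ::ₘ D.erase d).sum + ((d-1) ::ₘ D.erase d).card ≤ k := by
          have := measure_dec_lt hd hle; omega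
        have h1dec : ∀ e ∈ (d-1) ::ₘ D.erase d, 1 ≤ e := by
          intro e he
          rcases Multiset.mem_cons.mp he with rfl | he'
          · omega
          · exact h1E e he'
        have h2dec : ∀ e ∈ (d-1) ::ₘ D.erase d, e ≤ w := by
          intro e he
          rcases Multiset.mem_cons.mp he with rfl | he'
          · omega
          · exact h2E e he'
        have ihdec : NSl (((d-1) ::ₘ D.erase d).sort (·≤·)) ≤ w * Bm ((d-1) ::ₘ D.erase d) :=
          ih _ hmdec h1dec h2dec
        rw [hsort2] at ihdec
        rw [if_neg hle] at hB
        rw [hsort, hB]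
        nlinarith

section Prob
variable {n : ℕ}

/-- sum over all boolean inputs of a per-coordinate product -/
lemma sum_prod_coord (h : Fin n → Bool → ℝ) :
    ∑ x : Fin n → Bool, ∏ i, h i (x i) = ∏ i, (h i true + h i false) := by
  have e1 : ∀ i : Fin n, (h i true + h i false) = ∑ b : Bool, h i b := by
    intro i; rw [Fintype.sum_bool]
  rw [Finset.prod_congr rfl (fun i _ => e1 i), Finset.prod_univ_sum]
  rw [Fintype.piFinset_univ]

/-- the number (as a real sum) of inputs agreeing with `y` on `E` -/
lemma sum_indicator_agree (E : Finset (Fin n)) (y : Fin n → Bool) :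
    ∑ x : Fin n → Bool, (if ∀ i ∈ E, x i = y i then (1:ℝ) else 0) = 2^(n - E.card) := by
  have key : ∀ x : Fin n → Bool,
      (if ∀ i ∈ E, x i = y i then (1:ℝ) else 0)
        = ∏ i : Fin n, (if i ∈ E then (if x i = y i then (1:ℝ) else 0) else 1) := by
    intro x
    rw [Finset.prod_ite_mem, Finset.univ_inter, Finset.prod_boole]
    congr
  calc ∑ x : Fin n → Bool, (if ∀ i ∈ E, x i = y i then (1:ℝ) else 0)
      = ∑ x : Fin n → Bool, ∏ i : Fin n, (if i ∈ E then (if x i = y i then (1:ℝ) else 0) else 1) :=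
        Finset.sum_congr rfl (fun x _ => key x)
    _ = ∏ i : Fin n, ((if i ∈ E then (if true = y i then (1:ℝ) else 0) else 1)
          + (if i ∈ E then (if false = y i then (1:ℝ) else 0) else 1)) :=
        sum_prod_coord (fun i b => if i ∈ E then (if b = y i then (1:ℝ) else 0) else 1)
    _ = ∏ i : Fin n, (if i ∈ E then (1:ℝ) else 2) := by
        apply Finset.prod_congr rfl
        intro i _
        by_cases hi : i ∈ E
        · rw [if_pos hi, if_pos hi, if_pos hi]
          cases hy : y i <;> norm_num
        · rw [if_neg hi, if_neg hi, if_neg hi]; norm_num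
    _ = 2^(n - E.card) := by
        rw [Finset.prod_ite, Finset.prod_const_one, one_mul, Finset.prod_const]
        have hfil : Finset.univ.filter (fun i => ¬ (i ∈ E)) = Eᶜ := by
          ext i; simp
        rw [hfil, Finset.card_compl, Fintype.card_fin]

lemma card_fun_bool : Fintype.card (Fin n → Bool) = 2^n := by
  simp [Fintype.card_fun]

/-- independence: if `F` depends only on coordinates in `P` and `G` only on the others,
the sum of the product factorizes -/
lemma sum_mul_indep (P : Finset (Fin n)) (F G : (Fin n → Bool) → ℝ)
    (hF : ∀ x x' : Fin n → Bool, (∀ i ∈ P, x i = x' i) → F x = F x')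
    (hG : ∀ x x' : Fin n → Bool, (∀ i ∉ P, x i = x' i) → G x = G x') :
    (∑ x : Fin n → Bool, F x * G x) * 2^n
      = (∑ x : Fin n → Bool, F x) * (∑ x : Fin n → Bool, G x) := by
  classical
  set p : Fin n → Prop := fun i => i ∈ P with hp
  have : DecidablePred p := fun i => by rw [hp]; infer_instance
  set e := (Equiv.piEquivPiSubtypeProd p (fun _ => Bool)).symm with he
  set F' : ({ i // p i } → Bool) → ℝ := fun u => F (e (u, fun _ => false)) with hF'
  set G' : ({ i // ¬ p i } → Bool) → ℝ := fun v => G (e (fun _ => false, v)) with hG'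
  have hFe : ∀ u v, F (e (u, v)) = F' u := by
    intro u v
    apply hF
    intro i hi
    simp only [he, Equiv.piEquivPiSubtypeProd_symm_apply]
    rw [dif_pos hi, dif_pos hi]
  have hGe : ∀ u v, G (e (u, v)) = G' v := by
    intro u v
    apply hG
    intro i hi
    simp only [he, Equiv.piEquivPiSubtypeProd_symm_apply]
    rw [dif_neg hi, dif_neg hi]
  have cardP : Fintype.card { i // p i } = P.card := by
    simp [hp, Fintype.card_subtype]
  have cardnP : Fintype.card { i // ¬ p i } = n - P.card := by
    rw [Fintype.card_subtype_compl, cardP, Fintype.card_fin]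
  have hPn : P.card ≤ n := by
    have := Finset.card_le_univ P; simpa using this
  have s1 : ∑ x : Fin n → Bool, F x * G x = (∑ u, F' u) * (∑ v, G' v) := by
    rw [← Equiv.sum_comp e (fun x => F x * G x), Fintype.sum_prod_type]
    simp only [hFe, hGe]
    rw [Finset.sum_mul_sum]
  have s2 : ∑ x : Fin n → Bool, F x = (2:ℝ)^(n - P.card) * ∑ u, F' u := by
    rw [← Equiv.sum_comp e F, Fintype.sum_prod_type]
    have : ∀ u, ∑ v : { i // ¬ p i } → Bool, F (e (u, v)) = (2:ℝ)^(n - P.card) * F' u := by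
      intro u
      rw [Finset.sum_congr rfl (fun v _ => hFe u v), Finset.sum_const]
      simp [Fintype.card_fun, cardnP, mul_comm]
    rw [Finset.sum_congr rfl (fun u _ => this u), ← Finset.mul_sum]
  have s3 : ∑ x : Fin n → Bool, G x = (2:ℝ)^(P.card) * ∑ v, G' v := by
    rw [← Equiv.sum_comp e G, Fintype.sum_prod_type]
    have : ∀ u : { i // p i } → Bool, ∑ v : { i // ¬ p i } → Bool, G (e (u, v)) = ∑ v, G' v := by
      intro u
      exact Finset.sum_congr rfl (fun v _ => hGe u v)
    rw [Finset.sum_congr rfl (fun u _ => this u), Finset.sum_const]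
    simp [Fintype.card_fun, cardP, mul_comm]
  rw [s1, s2, s3]
  have : (2:ℝ)^(n - P.card) * (2:ℝ)^(P.card) = 2^n := by
    rw [← pow_add]
    congr 1
    omega
  rw [← this]
  ring

end Prob

section Cube
variable {n : ℕ}

def cube (E : Finset (Fin n)) (y : Fin n → Bool) : Finset (Fin n → Bool) :=
  Finset.univ.filter (fun x => ∀ i ∈ E, x i = y i)

lemma card_cube (E : Finset (Fin n)) (y : Fin n → Bool) :
    ((cube E y).card : ℝ) = 2^(n - E.card) := by
  rw [← sum_indicator_agree E y, cube]
  rw [Finset.sum_ite, Finset.sum_const_zero, add_zero, Finset.sum_const]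
  simp

lemma costOn_nonneg : ∀ (t : DecTree n) (x : Fin n → Bool),
    0 ≤ t.costOn (fun _ => (1:ℝ)) x := by
  intro t
  induction t with
  | leaf b => intro x; simp [DecTree.costOn]
  | node i t0 t1 ih0 ih1 =>
    intro x
    simp only [DecTree.costOn]
    have := ih0 x; have := ih1 x
    split <;> linarith

lemma cube_insert {E : Finset (Fin n)} {i : Fin n} (hiE : i ∉ E) (y : Fin n → Bool) (b : Bool) :
    cube (insert i E) (Function.update y i b) = (cube E y).filter (fun x => x i = b) := by
  ext x
  simp only [cube, Finset.mem_filter, Finset.mem_univ, true_and, Finset.mem_insert]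
  constructor
  · intro h
    refine ⟨fun j hj => ?_, ?_⟩
    · have hji : j ≠ i := by rintro rfl; exact hiE hj
      have := h j (Or.inr hj)
      rwa [Function.update_of_ne hji b y] at this
    · have := h i (Or.inl rfl)
      rwa [Function.update_self] at this
  · rintro ⟨h1, h2⟩ j hj
    rcases hj with rfl | hj
    · rwa [Function.update_self]
    · have hji : j ≠ i := by rintro rfl; exact hiE hj
      rw [Function.update_of_ne hji b y]
      exact h1 j hj

lemma cube_sum_split {E : Finset (Fin n)} {i : Fin n} (hiE : i ∉ E) (y : Fin n → Bool)
    (g : (Fin n → Bool) → ℝ) :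
    ∑ x ∈ cube E y, g x
      = (∑ x ∈ cube (insert i E) (Function.update y i false), g x)
        + ∑ x ∈ cube (insert i E) (Function.update y i true), g x := by
  rw [cube_insert hiE y false, cube_insert hiE y true]
  have h1 : (cube E y).filter (fun x => x i = false)
      = (cube E y).filter (fun x => ¬ (x i = true)) := by
    apply Finset.filter_congr; intro x _; simp
  rw [h1, add_comm]
  exact (Finset.sum_filter_add_sum_filter_not _ _ _).symm

lemma card_lt_of_not_mem {E : Finset (Fin n)} {i : Fin n} (hiE : i ∉ E) : E.card < n := by
  have h : E ⊂ Finset.univ := Finset.ssubset_univ_iff.mpr (fun he => hiE (he ▸ Finset.mem_univ i))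
  have := Finset.card_lt_card h
  simpa using this

/-- Main adaptive lower bound over subcubes. -/
lemma tree_lb {m : ℕ} : ∀ (t : DecTree n) (S : Finset (Fin m)) (U : Fin m → Finset (Fin n))
    (E : Finset (Fin n)) (y : Fin n → Bool),
    (∀ j ∈ S, (U j).Nonempty) →
    (∀ j ∈ S, ∀ k ∈ S, j ≠ k → Disjoint (U j) (U k)) →
    (∀ j ∈ S, Disjoint (U j) E) →
    (∀ x ∈ cube E y, t.eval x = decide (∃ j ∈ S, ∀ i ∈ U j, x i = true)) →
    Bm (S.val.map fun j => (U j).card) * 2^(n - E.card)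
      ≤ ∑ x ∈ cube E y, t.costOn (fun _ => 1) x := by
  intro t
  induction t with
  | leaf b =>
    intro S U E y h1 h2 h3 hc
    rcases S.eq_empty_or_nonempty with rfl | ⟨j, hj⟩
    · simp only [Finset.empty_val, Multiset.map_zero, Bm_zero, zero_mul]
      apply Finset.sum_nonneg
      intro x _
      exact costOn_nonneg _ x
    · exfalso
      have hx1 : (fun i => if i ∈ E then y i else true) ∈ cube E y := by
        simp only [cube, Finset.mem_filter, Finset.mem_univ, true_and]
        intro i hi; simp [hi]
      have hx0 : (fun i => if i ∈ E then y i else false) ∈ cube E y := by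
        simp only [cube, Finset.mem_filter, Finset.mem_univ, true_and]
        intro i hi; simp [hi]
      have e1 := hc _ hx1
      have e0 := hc _ hx0
      simp only [DecTree.eval] at e1 e0
      rw [e0] at e1
      rw [decide_eq_decide] at e1
      have htrue : ∃ j ∈ S, ∀ i ∈ U j, (fun i => if i ∈ E then y i else true) i = true := by
        refine ⟨j, hj, fun i hi => ?_⟩
        have : i ∉ E := Finset.disjoint_left.mp (h3 j hj) hi
        simp [this]
      have hfalse := e1.mpr htrue
      obtain ⟨j', hj', hall⟩ := hfalse
      obtain ⟨i, hi⟩ := h1 j' hj'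
      have hiE : i ∉ E := Finset.disjoint_left.mp (h3 j' hj') hi
      have := hall i hi
      simp [hiE] at this
  | node i t0 t1 ih0 ih1 =>
    intro S U E y h1 h2 h3 hc
    by_cases hiE : i ∈ E
    · -- coordinate already fixed on the cube
      cases hyi : y i
      · -- y i = false : the relevant child is t0
        have hc0 : ∀ x ∈ cube E y, t0.eval x = decide (∃ j ∈ S, ∀ i' ∈ U j, x i' = true) := by
          intro x hx
          have hxi : x i = false := by
            have := (Finset.mem_filter.mp hx).2 i hiE
            rw [this, hyi]
          have := hc x hx
          simpa [DecTree.eval, hxi] using this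
        have hrec := ih0 S U E y h1 h2 h3 hc0
        refine le_trans hrec ?_
        apply Finset.sum_le_sum
        intro x hx
        have hxi : x i = false := by
          have := (Finset.mem_filter.mp hx).2 i hiE
          rw [this, hyi]
        simp only [DecTree.costOn, hxi]
        simp
      · have hc1 : ∀ x ∈ cube E y, t1.eval x = decide (∃ j ∈ S, ∀ i' ∈ U j, x i' = true) := by
          intro x hx
          have hxi : x i = true := by
            have := (Finset.mem_filter.mp hx).2 i hiE
            rw [this, hyi]
          have := hc x hx
          simpa [DecTree.eval, hxi] using this
        have hrec := ih1 S U E y h1 h2 h3 hc1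
        refine le_trans hrec ?_
        apply Finset.sum_le_sum
        intro x hx
        have hxi : x i = true := by
          have := (Finset.mem_filter.mp hx).2 i hiE
          rw [this, hyi]
        simp only [DecTree.costOn, hxi]
        simp
    · -- i not fixed: split the cube
      have hEn : E.card < n := card_lt_of_not_mem hiE
      have hcardIns : (insert i E).card = E.card + 1 := Finset.card_insert_of_notMem hiE
      have hpow : (2:ℝ)^(n - E.card) = 2^(n - E.card - 1) * 2 := by
        rw [← pow_succ]
        congr 1
        omega
      have hsplit := cube_sum_split hiE y (DecTree.costOn (fun _ => 1) (DecTree.node i t0 t1))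
      -- cost decomposition on each half
      have hcost : ∀ (b : Bool), ∀ x ∈ cube (insert i E) (Function.update y i b),
          (DecTree.node i t0 t1).costOn (fun _ => 1) x
            = 1 + (if b then t1 else t0).costOn (fun _ => 1) x := by
        intro b x hx
        have hxi : x i = b := by
          have := (Finset.mem_filter.mp hx).2 i (Finset.mem_insert_self i E)
          rwa [Function.update_self] at this
        cases b <;> simp [DecTree.costOn, hxi]
      have hcard0 := card_cube (insert i E) (Function.update y i false)
      have hcard1 := card_cube (insert i E) (Function.update y i true)
      rw [hcardIns] at hcard0 hcard1
      have hnm : n - (E.card + 1) = n - E.card - 1 := by omega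
      rw [hnm] at hcard0 hcard1
      have hsum0 : ∑ x ∈ cube (insert i E) (Function.update y i false),
          (DecTree.node i t0 t1).costOn (fun _ => 1) x
          = 2^(n - E.card - 1) + ∑ x ∈ cube (insert i E) (Function.update y i false),
              t0.costOn (fun _ => 1) x := by
        rw [Finset.sum_congr rfl (hcost false), Finset.sum_add_distrib, Finset.sum_const]
        rw [nsmul_eq_mul, mul_one, hcard0]
        norm_num
      have hsum1 : ∑ x ∈ cube (insert i E) (Function.update y i true),
          (DecTree.node i t0 t1).costOn (fun _ => 1) x
          = 2^(n - E.card - 1) + ∑ x ∈ cube (insert i E) (Function.update y i true),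
              t1.costOn (fun _ => 1) x := by
        rw [Finset.sum_congr rfl (hcost true), Finset.sum_add_distrib, Finset.sum_const]
        rw [nsmul_eq_mul, mul_one, hcard1]
        norm_num
      by_cases hiU : ∃ j ∈ S, i ∈ U j
      · obtain ⟨j₀, hj₀, hij₀⟩ := hiU
        set d₀ := (U j₀).card with hd₀
        have hd₀mem : d₀ ∈ S.val.map fun j => (U j).card :=
          Multiset.mem_map.mpr ⟨j₀, hj₀, rfl⟩
        have hSval : (S.erase j₀).val = S.val.erase j₀ := Finset.erase_val _ _
        have hconsS : j₀ ::ₘ (S.erase j₀).val = S.val := by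
          rw [hSval]; exact Multiset.cons_erase hj₀
        have idA : ((S.erase j₀).val.map fun j => (U j).card)
            = (S.val.map fun j => (U j).card).erase d₀ := by
          conv_rhs => rw [← hconsS]
          rw [Multiset.map_cons, Multiset.erase_cons_head]
        -- branch 0 : term j₀ dies
        have hc0 : ∀ x ∈ cube (insert i E) (Function.update y i false),
            t0.eval x = decide (∃ j ∈ S.erase j₀, ∀ i' ∈ U j, x i' = true) := by
          intro x hx
          have hx2 := hx
          rw [cube_insert hiE y false] at hx2
          have hx' : x ∈ cube E y := (Finset.mem_filter.mp hx2).1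
          have hxi : x i = false := (Finset.mem_filter.mp hx2).2
          have he := hc x hx'
          simp [DecTree.eval, hxi] at he
          rw [he, decide_eq_decide]
          constructor
          · rintro ⟨j, hj, hall⟩
            refine ⟨j, Finset.mem_erase.mpr ⟨?_, hj⟩, hall⟩
            rintro rfl
            have := hall i hij₀
            rw [hxi] at this
            exact Bool.false_ne_true this
          · rintro ⟨j, hj, hall⟩
            exact ⟨j, Finset.mem_of_mem_erase hj, hall⟩
        have ih0' := ih0 (S.erase j₀) U (insert i E) (Function.update y i false)
          (fun j hj => h1 j (Finset.mem_of_mem_erase hj))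
          (fun j hj k hk hjk => h2 j (Finset.mem_of_mem_erase hj) k (Finset.mem_of_mem_erase hk) hjk)
          (by
            intro j hj
            rw [Finset.disjoint_insert_right]
            refine ⟨?_, h3 j (Finset.mem_of_mem_erase hj)⟩
            intro hij
            have hjne : j ≠ j₀ := (Finset.mem_erase.mp hj).1
            exact Finset.disjoint_left.mp
              (h2 j (Finset.mem_of_mem_erase hj) j₀ hj₀ hjne) hij hij₀)
          hc0
        rw [idA, hcardIns, hnm] at ih0'
        -- branch 1
        rcases le_or_gt d₀ 1 with hd₀1 | hd₀2
        · -- term j₀ gets satisfied: cost of t1 is at least 0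
          have h1nonneg : (0:ℝ) ≤ ∑ x ∈ cube (insert i E) (Function.update y i true),
              t1.costOn (fun _ => 1) x :=
            Finset.sum_nonneg (fun x _ => costOn_nonneg _ _)
          have hbr := Bm_le_branch hd₀mem
          rw [if_pos hd₀1] at hbr
          rw [hsplit, hsum0, hsum1, hpow]
          have hp2 : (0:ℝ) ≤ 2^(n - E.card - 1) := by positivity
          nlinarith [ih0', hbr, h1nonneg, hp2]
        · -- term j₀ shrinks
          set U' : Fin m → Finset (Fin n) := Function.update U j₀ ((U j₀).erase i) with hU'
          have hU'j₀ : U' j₀ = (U j₀).erase i := by rw [hU', Function.update_self]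
          have hU'ne : ∀ j, j ≠ j₀ → U' j = U j := by
            intro j hj; rw [hU', Function.update_of_ne hj]
          have idB : (S.val.map fun j => (U' j).card)
              = (d₀ - 1) ::ₘ ((S.val.map fun j => (U j).card).erase d₀) := by
            conv_lhs => rw [← hconsS]
            rw [Multiset.map_cons, ← idA]
            congr 1
            · rw [hU'j₀, Finset.card_erase_of_mem hij₀]
            · apply Multiset.map_congr rfl
              intro j hj
              have hj' : j ∈ S.erase j₀ := hj
              have hjne : j ≠ j₀ := Finset.ne_of_mem_erase hj'
              rw [hU'ne j hjne]
          have hc1 : ∀ x ∈ cube (insert i E) (Function.update y i true),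
              t1.eval x = decide (∃ j ∈ S, ∀ i' ∈ U' j, x i' = true) := by
            intro x hx
            have hx2 := hx
            rw [cube_insert hiE y true] at hx2
            have hx' : x ∈ cube E y := (Finset.mem_filter.mp hx2).1
            have hxi : x i = true := (Finset.mem_filter.mp hx2).2
            have he := hc x hx'
            simp [DecTree.eval, hxi] at he
            rw [he, decide_eq_decide]
            constructor
            · rintro ⟨j, hj, hall⟩
              refine ⟨j, hj, fun i' hi' => ?_⟩
              by_cases hjj : j = j₀
              · subst hjj
                rw [hU'j₀] at hi'
                exact hall i' (Finset.mem_of_mem_erase hi')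
              · rw [hU'ne j hjj] at hi'
                exact hall i' hi'
            · rintro ⟨j, hj, hall⟩
              refine ⟨j, hj, fun i' hi' => ?_⟩
              by_cases hjj : j = j₀
              · subst hjj
                by_cases hii : i' = i
                · subst hii; exact hxi
                · exact hall i' (by rw [hU'j₀]; exact Finset.mem_erase.mpr ⟨hii, hi'⟩)
              · exact hall i' (by rw [hU'ne j hjj]; exact hi')
          have ih1' := ih1 S U' (insert i E) (Function.update y i true)
            (by
              intro j hj
              by_cases hjj : j = j₀
              · subst hjj
                rw [hU'j₀]
                rw [← Finset.card_pos, Finset.card_erase_of_mem hij₀]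
                omega
              · rw [hU'ne j hjj]; exact h1 j hj)
            (by
              intro j hj k hk hjk
              have hsub : ∀ l, U' l ⊆ U l := by
                intro l
                by_cases hll : l = j₀
                · subst hll; rw [hU'j₀]; exact Finset.erase_subset _ _
                · rw [hU'ne l hll]
              exact Finset.disjoint_of_subset_left (hsub j)
                (Finset.disjoint_of_subset_right (hsub k) (h2 j hj k hk hjk)))
            (by
              refine fun j hj => ?_
              rw [Finset.disjoint_insert_right]
              constructor
              · by_cases hjj : j = j₀
                · subst hjj; rw [hU'j₀]; exact Finset.notMem_erase i _
                · rw [hU'ne j hjj]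
                  intro hij
                  exact Finset.disjoint_left.mp (h2 j hj j₀ hj₀ hjj) hij hij₀
              · by_cases hjj : j = j₀
                · subst hjj; rw [hU'j₀]
                  exact Finset.disjoint_of_subset_left (Finset.erase_subset _ _) (h3 j hj)
                · rw [hU'ne j hjj]; exact h3 j hj)
            hc1
          rw [idB, hcardIns, hnm] at ih1'
          have hbr := Bm_le_branch hd₀mem
          rw [if_neg (by omega : ¬ d₀ ≤ 1)] at hbr
          rw [hsplit, hsum0, hsum1, hpow]
          have hp2 : (0:ℝ) ≤ 2^(n - E.card - 1) := by positivity
          nlinarith [ih0', ih1', hbr, hp2]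
      · -- i is in no live term
        push_neg at hiU
        have hcb : ∀ (b : Bool), ∀ x ∈ cube (insert i E) (Function.update y i b),
            (if b then t1 else t0).eval x = decide (∃ j ∈ S, ∀ i' ∈ U j, x i' = true) := by
          intro b x hx
          have hx2 := hx
          rw [cube_insert hiE y b] at hx2
          have hx' : x ∈ cube E y := (Finset.mem_filter.mp hx2).1
          have hxi : x i = b := (Finset.mem_filter.mp hx2).2
          have he := hc x hx'
          cases b
          · simpa [DecTree.eval, hxi] using he
          · simpa [DecTree.eval, hxi] using he
        have h3' : ∀ (b : Bool), ∀ j ∈ S, Disjoint (U j) (insert i E) := by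
          intro b j hj
          rw [Finset.disjoint_insert_right]
          exact ⟨hiU j hj, h3 j hj⟩
        have ih0' := ih0 S U (insert i E) (Function.update y i false) h1 h2 (h3' false)
          (by simpa using hcb false)
        have ih1' := ih1 S U (insert i E) (Function.update y i true) h1 h2 (h3' true)
          (by simpa using hcb true)
        rw [hcardIns, hnm] at ih0' ih1'
        rw [hsplit, hsum0, hsum1, hpow]
        have hp2 : (0:ℝ) ≤ 2^(n - E.card - 1) := by positivity
        have hB := Bm_nonneg (S.val.map fun j => (U j).card)
        nlinarith [ih0', ih1', hp2, hB]

end Cube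

section KNsec
variable {n m : ℕ}
def KN (T : Fin m → Finset (Fin n)) : List (Fin m) → (Fin n → Bool) → ℕ
  | [], _ => 0
  | j :: L, x => (T j).card + (if ∀ i ∈ T j, x i = true then 0 else KN T L x)

lemma KN_congr (T : Fin m → Finset (Fin n)) : ∀ (L : List (Fin m)) (x x' : Fin n → Bool),
    (∀ k ∈ L, ∀ i ∈ T k, x i = x' i) → KN T L x = KN T L x' := by
  intro L
  induction L with
  | nil => intro x x' _; rfl
  | cons j L ih =>
    intro x x' h
    simp only [KN]
    have hsat : (∀ i ∈ T j, x i = true) ↔ (∀ i ∈ T j, x' i = true) := by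
      constructor
      · intro hs i hi; rw [← h j (List.mem_cons_self) i hi]; exact hs i hi
      · intro hs i hi; rw [h j (List.mem_cons_self) i hi]; exact hs i hi
    have hrest : KN T L x = KN T L x' :=
      ih x x' (fun k hk i hi => h k (List.mem_cons_of_mem j hk) i hi)
    by_cases hx : ∀ i ∈ T j, x i = true
    · rw [if_pos hx, if_pos (hsat.mp hx)]
    · rw [if_neg hx, if_neg (fun hx' => hx (hsat.mpr hx')), hrest]

lemma KN_sum (T : Fin m → Finset (Fin n))
    (hdisj : ∀ j k : Fin m, j ≠ k → Disjoint (T j) (T k)) :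
    ∀ js : List (Fin m), js.Nodup →
    ∑ x : Fin n → Bool, (KN T js x : ℝ) = 2^n * NSl (js.map fun j => (T j).card) := by
  intro js
  induction js with
  | nil => simp [KN, NSl]
  | cons j L ih =>
    intro hnd
    have hndL : L.Nodup := (List.nodup_cons.mp hnd).2
    have hjL : j ∉ L := (List.nodup_cons.mp hnd).1
    set d := (T j).card with hd
    have hdn : d ≤ n := by
      have := Finset.card_le_univ (T j)
      simpa using this
    have h2n : (0:ℝ) < 2^n := by positivity
    -- pointwise rewrite
    have hpt : ∀ x : Fin n → Bool, (KN T (j :: L) x : ℝ)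
        = d + (if ∀ i ∈ T j, x i = true then (0:ℝ) else 1) * (KN T L x : ℝ) := by
      intro x
      simp only [KN]
      by_cases hx : ∀ i ∈ T j, x i = true
      · rw [if_pos hx, if_pos hx]; push_cast; ring
      · rw [if_neg hx, if_neg hx]; push_cast; ring
    rw [Finset.sum_congr rfl (fun x _ => hpt x), Finset.sum_add_distrib, Finset.sum_const]
    -- the factorization
    have hsplit := sum_mul_indep (T j)
      (fun x => if ∀ i ∈ T j, x i = true then (0:ℝ) else 1)
      (fun x => (KN T L x : ℝ))
      (by
        intro x x' hagree
        have : (∀ i ∈ T j, x i = true) ↔ (∀ i ∈ T j, x' i = true) := by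
          constructor
          · intro hs i hi; rw [← hagree i hi]; exact hs i hi
          · intro hs i hi; rw [hagree i hi]; exact hs i hi
        by_cases hx : ∀ i ∈ T j, x i = true
        · rw [if_pos hx, if_pos (this.mp hx)]
        · rw [if_neg hx, if_neg (fun h => hx (this.mpr h))])
      (by
        intro x x' hagree
        have : KN T L x = KN T L x' := by
          apply KN_congr
          intro k hk i hi
          apply hagree
          have hkj : k ≠ j := fun he => hjL (he ▸ hk)
          exact Finset.disjoint_left.mp (hdisj k j hkj) hi
        rw [this])
    have hF : ∑ x : Fin n → Bool, (if ∀ i ∈ T j, x i = true then (0:ℝ) else 1)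
        = 2^n * qr d := by
      have e1 : ∀ x : Fin n → Bool, (if ∀ i ∈ T j, x i = true then (0:ℝ) else 1)
          = 1 - (if ∀ i ∈ T j, x i = (fun _ => true) i then (1:ℝ) else 0) := by
        intro x
        by_cases hx : ∀ i ∈ T j, x i = true
        · have hx2 : ∀ i ∈ T j, x i = (fun _ => true) i := hx
          rw [if_pos hx, if_pos hx2]; ring
        · have hx2 : ¬ ∀ i ∈ T j, x i = (fun _ => true) i := hx
          rw [if_neg hx, if_neg hx2]; ring
      rw [Finset.sum_congr rfl (fun x _ => e1 x), Finset.sum_sub_distrib,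
        sum_indicator_agree (T j) (fun _ => true), Finset.sum_const, Finset.card_univ,
        card_fun_bool]
      have h2d : (2:ℝ)^(n-d) * 2^d = 2^n := by
        rw [← pow_add]; congr 1; omega
      have hqd : (1/2:ℝ)^d = 1/2^d := by
        rw [div_pow, one_pow]
      have h2dpos : (0:ℝ) < 2^d := by positivity
      simp only [nsmul_eq_mul, mul_one, qr, hqd]
      field_simp
      simp only [← hd, Nat.cast_pow, Nat.cast_ofNat]
      nlinarith [h2d]
    rw [ih hndL] at hsplit
    rw [hF] at hsplit
    -- extract the product sum
    have hprod : ∑ x : Fin n → Bool, (if ∀ i ∈ T j, x i = true then (0:ℝ) else 1) * (KN T L x : ℝ)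
        = qr d * (2^n * NSl (L.map fun j => (T j).card)) := by
      have h2 := hsplit
      have hcancel : (∑ x : Fin n → Bool, (if ∀ i ∈ T j, x i = true then (0:ℝ) else 1) * (KN T L x : ℝ)) * 2^n
          = (qr d * (2^n * NSl (L.map fun j => (T j).card))) * 2^n := by
        rw [h2]; ring
      exact mul_right_cancel₀ (ne_of_gt h2n) hcancel
    rw [hprod]
    simp only [List.map_cons, NSl, Finset.card_univ, card_fun_bool, nsmul_eq_mul]
    push_cast
    ring

end KNsec

section NAsec
variable {n m : ℕ}
lemma split_list (p : Fin m → Prop) [DecidablePred p] : ∀ l : List (Fin m),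
    (∀ j ∈ l, ¬ p j) ∨ ∃ l₁ j l₂, l = l₁ ++ j :: l₂ ∧ (∀ k ∈ l₁, ¬ p k) ∧ p j := by
  intro l
  induction l with
  | nil => left; simp
  | cons a l ih =>
    by_cases ha : p a
    · right; exact ⟨[], a, l, by simp, by simp, ha⟩
    · rcases ih with h | ⟨l₁, j, l₂, rfl, h1, h2⟩
      · left
        intro j hj
        rcases List.mem_cons.mp hj with rfl | hj
        · exact ha
        · exact h j hj
      · right
        refine ⟨a :: l₁, j, l₂, by simp, ?_, h2⟩
        intro k hk
        rcases List.mem_cons.mp hk with rfl | hk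
        · exact ha
        · exact h1 k hk

lemma KN_all (T : Fin m → Finset (Fin n)) (x : Fin n → Bool) : ∀ (l : List (Fin m)),
    (∀ j ∈ l, ¬ ∀ i ∈ T j, x i = true) → KN T l x = (l.map fun j => (T j).card).sum := by
  intro l
  induction l with
  | nil => intro _; rfl
  | cons a l ih =>
    intro h
    simp only [KN, List.map_cons, List.sum_cons]
    rw [if_neg (h a (List.mem_cons_self)), ih (fun j hj => h j (List.mem_cons_of_mem a hj))]

lemma KN_firstSat (T : Fin m → Finset (Fin n)) (x : Fin n → Bool) (j : Fin m) (l₂ : List (Fin m))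
    (hj : ∀ i ∈ T j, x i = true) : ∀ (l₁ : List (Fin m)), (∀ k ∈ l₁, ¬ ∀ i ∈ T k, x i = true) →
    KN T (l₁ ++ j :: l₂) x = (l₁.map fun k => (T k).card).sum + (T j).card := by
  intro l₁
  induction l₁ with
  | nil => intro _; simp [KN, if_pos hj]
  | cons a l ih =>
    intro h
    simp only [KN, List.cons_append, List.map_cons, List.sum_cons, List.append_eq]
    rw [if_neg (h a (List.mem_cons_self)), ih (fun k hk => h k (List.mem_cons_of_mem a hk))]
    omega

/-- construction of the non-adaptive strategy from an ordering of the terms -/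
lemma na_strategy (T : Fin m → Finset (Fin n)) (f : (Fin n → Bool) → Bool)
    (hdisj : ∀ j k : Fin m, j ≠ k → Disjoint (T j) (T k))
    (hiff : ∀ x, f x = true ↔ ∃ j, ∀ i ∈ T j, x i = true)
    (js : List (Fin m)) (hjsmem : ∀ j, j ∈ js) (hjsnd : js.Nodup) :
    ∃ π : Equiv.Perm (Fin n), ∀ x, naCost n f (fun _ => 1) π x ≤ (KN T js x : ℝ) := by
  classical
  set blks : List (Fin n) := js.flatMap (fun j => Finset.sort (T j) (·≤·)) with hblks
  set restL : List (Fin n) := Finset.sort (Finset.univ \ Finset.univ.biUnion T) (·≤·) with hrestL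
  set vars : List (Fin n) := blks ++ restL with hvars
  have hblks_mem : ∀ i : Fin n, i ∈ blks ↔ ∃ j, i ∈ T j := by
    intro i
    rw [hblks, List.mem_flatMap]
    constructor
    · rintro ⟨j, _, hi⟩; exact ⟨j, (Finset.mem_sort _).mp hi⟩
    · rintro ⟨j, hi⟩; exact ⟨j, hjsmem j, (Finset.mem_sort _).mpr hi⟩
  have hnodub : blks.Nodup := by
    rw [hblks, List.nodup_flatMap]
    constructor
    · intro j _; exact Finset.sort_nodup _ _
    · apply hjsnd.imp
      intro a b hab
      intro i hia hib
      have h1 : i ∈ T a := (Finset.mem_sort _).mp hia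
      have h2 : i ∈ T b := (Finset.mem_sort _).mp hib
      exact Finset.disjoint_left.mp (hdisj a b hab) h1 h2
  have hvars_nodup : vars.Nodup := by
    apply List.Nodup.append hnodub (Finset.sort_nodup _ _)
    intro i hib hir
    obtain ⟨j, hj⟩ := (hblks_mem i).mp hib
    have := (Finset.mem_sort _).mp hir
    rw [Finset.mem_sdiff] at this
    exact this.2 (Finset.mem_biUnion.mpr ⟨j, Finset.mem_univ j, hj⟩)
  have hvars_mem : ∀ i : Fin n, i ∈ vars := by
    intro i
    rw [hvars, List.mem_append]
    by_cases hiB : ∃ j, i ∈ T j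
    · left; exact (hblks_mem i).mpr hiB
    · right
      rw [hrestL, Finset.mem_sort, Finset.mem_sdiff]
      push_neg at hiB
      exact ⟨Finset.mem_univ i, fun hc => by
        obtain ⟨j, _, hj⟩ := Finset.mem_biUnion.mp hc
        exact hiB j hj⟩
  have hvars_toFinset : vars.toFinset = Finset.univ := by
    ext i; simp [hvars_mem i]
  have hlen : vars.length = n := by
    have h1 := List.toFinset_card_of_nodup hvars_nodup
    rw [hvars_toFinset] at h1
    simpa using h1.symm
  set g : Fin n → Fin n := fun k => vars.get (Fin.cast hlen.symm k) with hg
  have hginj : Function.Injective g := by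
    intro a b hab
    have h1 := (List.nodup_iff_injective_get.mp hvars_nodup) hab
    have : (Fin.cast hlen.symm a) = (Fin.cast hlen.symm b) := h1
    exact Fin.ext (by simpa using congrArg Fin.val this)
  set π : Equiv.Perm (Fin n) := Equiv.ofBijective g (Finite.injective_iff_bijective.mp hginj)
    with hπdef
  have hπ : ∀ k : Fin n, π k = vars.get (Fin.cast hlen.symm k) := fun _ => rfl
  -- membership in prefix sets
  have mem_prefix : ∀ (i : Fin n) (k : ℕ),
      i ∈ prefixSet n π k ↔ ∃ (q : ℕ) (hq : q < vars.length), q < k ∧ vars.get ⟨q, hq⟩ = i := by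
    intro i k
    rw [prefixSet, Finset.mem_filter]
    simp only [Finset.mem_univ, true_and]
    constructor
    · intro h
      refine ⟨(π.symm i).val, by omega, h, ?_⟩
      have h2 : π (π.symm i) = i := π.apply_symm_apply i
      rw [hπ] at h2
      convert h2 using 2
      exact Fin.ext rfl
    · rintro ⟨q, hq, hqk, hget⟩
      have hqn : q < n := by omega
      have : π ⟨q, hqn⟩ = i := by
        rw [hπ]
        convert hget using 2
        exact Fin.ext rfl
      rw [← this, Equiv.symm_apply_apply]
      exact hqk
  have prefix_of_append : ∀ (A B : List (Fin n)), vars = A ++ B →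
      ∀ i ∈ A, i ∈ prefixSet n π A.length := by
    intro A B hAB i hi
    obtain ⟨q, hq, hget⟩ := List.mem_iff_getElem.mp hi
    rw [mem_prefix]
    have hqv : q < vars.length := by
      rw [hAB, List.length_append]; omega
    refine ⟨q, hqv, hq, ?_⟩
    have : vars[q] = A[q] := by
      rw [List.getElem_of_eq hAB hqv]
      exact List.getElem_append_left hq
    simp [this, hget]
  -- the prefix of length (KN T js x) determines f on x
  have hdet : ∀ x : Fin n → Bool, Determines n f (prefixSet n π (KN T js x)) x := by
    intro x
    rcases split_list (fun j => ∀ i ∈ T j, x i = true) js with hall | ⟨l₁, j, l₂, hjs, hl₁, hj⟩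
    · -- no term satisfied
      have hKN : KN T js x = blks.length := by
        rw [KN_all T x js hall, hblks, List.length_flatMap]
        congr 1
        apply List.map_congr_left
        intro j _
        simp [Function.comp_def, Finset.length_sort]
      intro x' hx'
      have hagree : ∀ j : Fin m, ∀ i ∈ T j, x' i = x i := by
        intro j i hi
        apply hx'
        rw [hKN]
        apply prefix_of_append blks restL rfl
        exact (hblks_mem i).mpr ⟨j, hi⟩
      rw [Bool.eq_iff_iff, hiff, hiff]
      constructor
      · rintro ⟨j, hjx⟩
        exact ⟨j, fun i hi => by rw [← hagree j i hi]; exact hjx i hi⟩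
      · rintro ⟨j, hjx⟩
        exact ⟨j, fun i hi => by rw [hagree j i hi]; exact hjx i hi⟩
    · -- first satisfied term j
      have hKN : KN T js x = ((l₁ ++ [j]).flatMap (fun k => Finset.sort (T k) (·≤·))).length := by
        rw [hjs, KN_firstSat T x j l₂ hj l₁ hl₁, List.length_flatMap]
        simp [Function.comp_def, Finset.length_sort]
      have hsplitvars : vars = ((l₁ ++ [j]).flatMap (fun k => Finset.sort (T k) (·≤·)))
          ++ ((l₂.flatMap (fun k => Finset.sort (T k) (·≤·))) ++ restL) := by
        rw [hvars, hblks, hjs]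
        rw [List.flatMap_append, List.flatMap_append]
        simp [List.append_assoc]
      intro x' hx'
      have hagree : ∀ i ∈ T j, x' i = x i := by
        intro i hi
        apply hx'
        rw [hKN]
        apply prefix_of_append _ _ hsplitvars
        rw [List.mem_flatMap]
        exact ⟨j, by simp, (Finset.mem_sort _).mpr hi⟩
      have hfx : f x = true := (hiff x).mpr ⟨j, hj⟩
      have hfx' : f x' = true := (hiff x').mpr ⟨j, fun i hi => by rw [hagree i hi]; exact hj i hi⟩
      rw [hfx, hfx']
  -- naSteps is at most KN
  have hsteps_le : ∀ x, naSteps n f π x ≤ KN T js x := by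
    intro x
    exact Nat.sInf_le (hdet x)
  have hsteps_le_n : ∀ x, naSteps n f π x ≤ n := by
    intro x
    apply Nat.sInf_le
    have huniv : prefixSet n π n = Finset.univ := by
      ext i
      simp [prefixSet, (π.symm i).isLt]
    show Determines n f (prefixSet n π n) x
    rw [huniv]
    intro x' hx'
    have : x' = x := funext (fun i => hx' i (Finset.mem_univ i))
    rw [this]
  -- cardinality of prefix sets
  have hcard_prefix : ∀ k : ℕ, k ≤ n → (prefixSet n π k).card = k := by
    intro k hk
    have hmap : prefixSet n π k = Finset.image π ((Finset.range k).attachFin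
        (fun q hq => lt_of_lt_of_le (Finset.mem_range.mp hq) hk)) := by
      ext i
      rw [Finset.mem_image]
      constructor
      · intro h
        have h1 : (π.symm i).val < k := by
          have := (Finset.mem_filter.mp h).2
          exact this
        refine ⟨π.symm i, ?_, π.apply_symm_apply i⟩
        rw [Finset.mem_attachFin, Finset.mem_range]
        exact h1
      · rintro ⟨v, hv, rfl⟩
        rw [prefixSet, Finset.mem_filter]
        refine ⟨Finset.mem_univ _, ?_⟩
        rw [Equiv.symm_apply_apply]
        rw [Finset.mem_attachFin, Finset.mem_range] at hv
        exact hv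
    rw [hmap, Finset.card_image_of_injective _ π.injective, Finset.card_attachFin,
      Finset.card_range]
  refine ⟨π, fun x => ?_⟩
  rw [naCost, Finset.sum_const, nsmul_eq_mul, mul_one,
    hcard_prefix (naSteps n f π x) (hsteps_le_n x)]
  exact_mod_cast hsteps_le x

end NAsec

section FullTree
variable {n : ℕ}

def mkTree (f : (Fin n → Bool) → Bool) : List (Fin n) → (Fin n → Bool) → DecTree n
  | [], y => .leaf (f y)
  | i :: l, y => .node i (mkTree f l (Function.update y i false))
      (mkTree f l (Function.update y i true))

lemma mkTree_eval (f : (Fin n → Bool) → Bool) : ∀ (l : List (Fin n)) (y x : Fin n → Bool),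
    (mkTree f l y).eval x = f (fun i => if i ∈ l then x i else y i) := by
  intro l
  induction l with
  | nil => intro y x; simp only [mkTree, DecTree.eval, List.not_mem_nil, if_false]
  | cons i l ih =>
    intro y x
    simp only [mkTree, DecTree.eval]
    have key : ∀ b : Bool, x i = b →
        f (fun j => if j ∈ l then x j else Function.update y i b j)
          = f (fun j => if j ∈ i :: l then x j else y j) := by
      intro b hb
      congr 1
      funext j
      by_cases hjl : j ∈ l
      · simp [hjl, List.mem_cons]
      · by_cases hji : j = i
        · subst hji
          simp [hjl, Function.update_self, hb.symm]
        · simp [hjl, hji, Function.update_of_ne hji]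
    cases hxi : x i
    · rw [if_neg (by simp [hxi]), ih, key false hxi]
    · rw [if_pos (by simp [hxi]), ih, key true hxi]

lemma exists_tree (f : (Fin n → Bool) → Bool) : ∃ t : DecTree n, t.Computes f := by
  refine ⟨mkTree f (List.finRange n) (fun _ => false), fun x => ?_⟩
  rw [mkTree_eval]
  congr 1
  funext i
  simp [List.mem_finRange]

lemma prodWeight_half (x : Fin n → Bool) :
    prodWeight n (fun _ => 1/2) x = (1/2 : ℝ)^n := by
  rw [prodWeight]
  have h : ∀ i ∈ Finset.univ, (if x i then (1/2:ℝ) else 1 - 1/2) = 1/2 := by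
    intro i _; split <;> norm_num
  rw [Finset.prod_congr rfl h, Finset.prod_const, Finset.card_univ, Fintype.card_fin]

end FullTree

section SortedJs
variable {n m : ℕ}

lemma js_exists (T : Fin m → Finset (Fin n)) :
    ∃ js : List (Fin m), (∀ j, j ∈ js) ∧ js.Nodup ∧
      (js.map fun j => (T j).card)
        = (Multiset.map (fun j => (T j).card) (Finset.univ : Finset (Fin m)).val).sort (·≤·) := by
  classical
  set le : Fin m → Fin m → Bool := fun a b => decide ((T a).card ≤ (T b).card) with hle
  set js : List (Fin m) := (List.finRange m).mergeSort le with hjs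
  have hperm : js ~ List.finRange m := List.mergeSort_perm _ _
  have hnd : js.Nodup := hperm.symm.nodup (List.nodup_finRange m)
  have hmem : ∀ j, j ∈ js := fun j => hperm.mem_iff.mpr (List.mem_finRange j)
  have hsorted : List.Pairwise (fun a b => le a b = true) js :=
    List.pairwise_mergeSort (by intro a b c; simp only [hle, decide_eq_true_eq]; omega)
      (by intro a b; simp only [hle, Bool.or_eq_true, decide_eq_true_eq]; omega)
      (List.finRange m)
  refine ⟨js, hmem, hnd, ?_⟩
  have h1 : (Multiset.map (fun j => (T j).card) (Finset.univ : Finset (Fin m)).val).sort (·≤·)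
      ~ (List.finRange m).map (fun j => (T j).card) := by
    rw [← Multiset.coe_eq_coe, Multiset.sort_eq]
    rfl
  have hp : (Multiset.map (fun j => (T j).card) (Finset.univ : Finset (Fin m)).val).sort (·≤·)
      ~ js.map (fun j => (T j).card) := h1.trans ((hperm.symm.map _))
  have hs2 : List.Pairwise (·≤·) (js.map fun j => (T j).card) := by
    rw [List.pairwise_map]
    apply hsorted.imp
    intro a b hab
    simpa [hle] using hab
  exact (List.Perm.eq_of_pairwise' (Multiset.pairwise_sort _ _) hs2 hp).symm
end SortedJs

end AuxAll

/-- Let `f` be a monotone read-once DNF in which every term contains at most `w`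
variables, where `w ≥ 1`. Under unit costs and the uniform distribution there is a
non-adaptive strategy of expected cost at most `w·OPT_A(f)`; in particular
`OPT_N(f) ≤ w·OPT_A(f)`. -/
theorem stmt18 (n : ℕ) (hn : 1 ≤ n) (w : ℕ) (hw : 1 ≤ w) (m : ℕ)
    (T : Fin m → Finset (Fin n)) (f : (Fin n → Bool) → Bool)
    (hf : IsReadOnceDNF n m T f)
    (hwidth : ∀ j, (T j).card ≤ w) :
    (∃ π : Equiv.Perm (Fin n),
        naExpCost n f (fun _ => 1) (fun _ => 1/2) π ≤
          (w : ℝ) * OPTA n f (fun _ => 1) (fun _ => 1/2)) ∧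
    OPTN n f (fun _ => 1) (fun _ => 1/2) ≤
      (w : ℝ) * OPTA n f (fun _ => 1) (fun _ => 1/2) := by
  classical
  obtain ⟨hne, hdisj, hiff⟩ := hf
  set D₀ : Multiset ℕ := Multiset.map (fun j => (T j).card) (Finset.univ : Finset (Fin m)).val
    with hD₀
  obtain ⟨js, hjsmem, hjsnd, hjssort⟩ := js_exists T
  obtain ⟨π, hπ⟩ := na_strategy T f hdisj hiff js hjsmem hjsnd
  have hhalfpow : ((1/2:ℝ))^n * 2^n = 1 := by
    rw [div_pow, one_pow, div_mul_eq_mul_div, one_mul, div_self (by positivity)]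
  have hhalfpos : (0:ℝ) ≤ (1/2:ℝ)^n := by positivity
  -- expected non-adaptive cost bound
  have hna : naExpCost n f (fun _ => 1) (fun _ => 1/2) π ≤ (w:ℝ) * Bm D₀ := by
    have step1 : naExpCost n f (fun _ => 1) (fun _ => 1/2) π
        ≤ ∑ x : Fin n → Bool, (1/2:ℝ)^n * (KN T js x : ℝ) := by
      rw [naExpCost]
      apply Finset.sum_le_sum
      intro x _
      rw [prodWeight_half]
      apply mul_le_mul_of_nonneg_left (hπ x) hhalfpos
    have step2 : ∑ x : Fin n → Bool, (1/2:ℝ)^n * (KN T js x : ℝ)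
        = NSl (js.map fun j => (T j).card) := by
      rw [← Finset.mul_sum, KN_sum T hdisj js hjsnd, ← mul_assoc, hhalfpow, one_mul]
    have step3 : NSl (js.map fun j => (T j).card) ≤ (w:ℝ) * Bm D₀ := by
      rw [hjssort]
      apply main_N w hw (D₀.sum + Multiset.card D₀) D₀ le_rfl
      · intro e he
        obtain ⟨j, _, rfl⟩ := Multiset.mem_map.mp he
        exact Finset.card_pos.mpr (hne j)
      · intro e he
        obtain ⟨j, _, rfl⟩ := Multiset.mem_map.mp he
        exact hwidth j
    exact step1.trans (step2 ▸ step3)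
  -- adaptive lower bound for every tree computing f
  have had : ∀ t : DecTree n, t.Computes f →
      Bm D₀ ≤ adExpCost n (fun _ => 1) (fun _ => 1/2) t := by
    intro t ht
    have hcube : cube (∅ : Finset (Fin n)) (fun _ => false) = Finset.univ := by
      ext x; simp [cube]
    have hc : ∀ x ∈ cube (∅ : Finset (Fin n)) (fun _ => false),
        t.eval x = decide (∃ j ∈ (Finset.univ : Finset (Fin m)), ∀ i ∈ T j, x i = true) := by
      intro x _
      rw [ht x, Bool.eq_iff_iff, hiff x, decide_eq_true_eq]
      simp
    have hlb := tree_lb t Finset.univ T ∅ (fun _ => false)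
      (fun j _ => hne j)
      (fun j _ k _ hjk => hdisj j k hjk)
      (fun j _ => Finset.disjoint_empty_right _)
      hc
    rw [hcube, Finset.card_empty, Nat.sub_zero] at hlb
    have hexp : adExpCost n (fun _ => 1) (fun _ => 1/2) t
        = (1/2:ℝ)^n * ∑ x : Fin n → Bool, t.costOn (fun _ => 1) x := by
      rw [adExpCost, Finset.mul_sum]
      apply Finset.sum_congr rfl
      intro x _
      rw [prodWeight_half]
    rw [hexp]
    calc Bm D₀ = (1/2:ℝ)^n * (Bm D₀ * 2^n) := by
          rw [mul_comm (Bm D₀) ((2:ℝ)^n), ← mul_assoc, hhalfpow, one_mul]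
      _ ≤ (1/2:ℝ)^n * ∑ x : Fin n → Bool, t.costOn (fun _ => 1) x :=
          mul_le_mul_of_nonneg_left hlb hhalfpos
  -- OPTA is at least Bm D₀
  have hOPTAset : { r : ℝ | ∃ t : DecTree n, DecTree.Computes t f
      ∧ r = adExpCost n (fun _ => 1) (fun _ => 1/2) t }.Nonempty := by
    obtain ⟨t, ht⟩ := exists_tree f
    exact ⟨adExpCost n (fun _ => 1) (fun _ => 1/2) t, t, ht, rfl⟩
  have hOPTA : Bm D₀ ≤ OPTA n f (fun _ => 1) (fun _ => 1/2) := by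
    apply le_csInf hOPTAset
    rintro r ⟨t, ht, rfl⟩
    exact had t ht
  have hw0 : (0:ℝ) ≤ (w:ℝ) := Nat.cast_nonneg w
  have main1 : naExpCost n f (fun _ => 1) (fun _ => 1/2) π
      ≤ (w:ℝ) * OPTA n f (fun _ => 1) (fun _ => 1/2) :=
    hna.trans (mul_le_mul_of_nonneg_left hOPTA hw0)
  refine ⟨⟨π, main1⟩, ?_⟩
  have hbdd : BddBelow { r : ℝ | ∃ π' : Equiv.Perm (Fin n),
      r = naExpCost n f (fun _ => 1) (fun _ => 1/2) π' } := by
    refine ⟨0, ?_⟩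
    rintro r ⟨π', rfl⟩
    apply Finset.sum_nonneg
    intro x _
    apply mul_nonneg
    · rw [prodWeight_half]; exact hhalfpos
    · rw [naCost]
      apply Finset.sum_nonneg
      intro i _
      exact zero_le_one
  have hOPTN : OPTN n f (fun _ => 1) (fun _ => 1/2)
      ≤ naExpCost n f (fun _ => 1) (fun _ => 1/2) π :=
    csInf_le hbdd ⟨π, rfl⟩
  exact hOPTN.trans main1
end
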